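/- Let θ ∈ [0, π/3]. The Cygan distance between the points [4k cos θ, 8k sin 2θ] (the center of 𝓘ₖ⁺) and [0,0] equals 4√(|k| cos θ)·|k cos θ - i sin θ|^{1/2}, which is ≥ 2√2 for every nonzero integer k. -/

import Mathlib

open Complex Real

/-- The Cygan distance on the Heisenberg group ℂ × ℝ. -/
noncomputable def cygan (p q : ℂ × ℝ) : ℝ :=
  Real.sqrt (‖((‖p.1 - q.1‖ ^ 2 : ℝ) : ℂ) -
    Complex.I * ((p.2 - q.2 + 2 * (p.1 * (starRingEnd ℂ) q.1).im : ℝ) : ℂ)‖)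

theorem cygan_distance_centers (θ : ℝ) (hθ0 : 0 ≤ θ) (hθ1 : θ ≤ π / 3)
    (k : ℤ) (hk : k ≠ 0) :
    cygan ((4 * k * Real.cos θ, 8 * k * Real.sin (2 * θ))) ((0, 0)) =
      4 * Real.sqrt (|(k : ℝ)| * Real.cos θ) *
        Real.sqrt (‖(k : ℂ) * Real.cos θ - Complex.I * Real.sin θ‖) ∧
    2 * Real.sqrt 2 ≤
      cygan ((4 * k * Real.cos θ, 8 * k * Real.sin (2 * θ))) ((0, 0)) := by
  have hπ : π/3 ≤ π := by linarith [Real.pi_pos]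
  have hc : (1/2 : ℝ) ≤ Real.cos θ := by
    have := Real.cos_le_cos_of_nonneg_of_le_pi hθ0 hπ hθ1
    rwa [Real.cos_pi_div_three] at this
  set c := Real.cos θ with hcdef
  set s := Real.sin θ with hsdef
  have hk1 : (1:ℝ) ≤ |(k:ℝ)| := by
    have := Int.one_le_abs hk
    exact_mod_cast this
  set A := ‖(k : ℂ) * c - Complex.I * s‖ with hA
  have hA1 : 1 ≤ A := by
    have hsq : A ^ 2 = (k:ℝ)^2 * c^2 + s^2 := by
      rw [hA, Complex.sq_norm, Complex.normSq_apply]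
      simp
      ring
    have hpyth : s^2 + c^2 = 1 := Real.sin_sq_add_cos_sq θ
    have hAnn : 0 ≤ A := hA ▸ norm_nonneg _
    have hk2 : (1:ℝ) ≤ (k:ℝ)^2 := by nlinarith [_root_.sq_abs (k:ℝ)]
    nlinarith [hsq, hpyth, hAnn, hk2, sq_nonneg c]
  have hAnn : 0 ≤ A := norm_nonneg _
  have key : ((‖(4 * (k:ℂ) * (c:ℝ)) - 0‖ ^ 2 : ℝ) : ℂ) -
      Complex.I * ((8 * (k:ℝ) * Real.sin (2*θ) - 0 +
        2 * ((4 * (k:ℂ) * (c:ℝ)) * (starRingEnd ℂ) 0).im : ℝ) : ℂ)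
      = (16 * (k:ℂ) * (c:ℝ)) * ((k : ℂ) * c - Complex.I * s) := by
    have h1 : (4 * (k:ℂ) * (c:ℝ)) - 0 = ((4 * k * c : ℝ) : ℂ) := by push_cast; ring
    rw [h1, Complex.norm_real, Real.norm_eq_abs, _root_.sq_abs, Real.sin_two_mul]
    simp only [map_zero, mul_zero, Complex.zero_im]
    rw [hsdef, hcdef]
    push_cast
    ring
  have habs : ‖(16 * (k:ℂ) * (c:ℝ)) * ((k : ℂ) * c - Complex.I * s)‖
      = 16 * |(k:ℝ)| * c * A := by
    rw [norm_mul, ← hA]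
    have h2 : ((16:ℂ) * k * c) = ((16 * k * c : ℝ) : ℂ) := by push_cast; ring
    rw [h2, Complex.norm_real, Real.norm_eq_abs, abs_mul, abs_mul, _root_.abs_of_nonneg (by linarith : (0:ℝ) ≤ c)]
    norm_num
  have hcyg : cygan ((4 * k * Real.cos θ, 8 * k * Real.sin (2 * θ))) ((0, 0)) =
      Real.sqrt (16 * |(k:ℝ)| * c * A) := by
    unfold cygan
    congr 1
    rw [← habs, ← key]
  constructor
  · rw [hcyg,
      show (16:ℝ) * |(k:ℝ)| * c * A = 16 * (|(k:ℝ)| * c) * A by ring,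
      Real.sqrt_mul (by positivity), Real.sqrt_mul (by norm_num),
      show Real.sqrt 16 = 4 from by
        rw [show (16:ℝ) = 4^2 by norm_num, Real.sqrt_sq (by norm_num)]]
  · rw [hcyg]
    have h8 : (8:ℝ) ≤ 16 * |(k:ℝ)| * c * A := by
      have hkc : (1/2:ℝ) ≤ |(k:ℝ)| * c := by nlinarith
      have h2 : (1/2:ℝ) * 1 ≤ (|(k:ℝ)| * c) * A :=
        mul_le_mul hkc hA1 one_pos.le (by positivity)
      nlinarith
    calc 2 * Real.sqrt 2 = Real.sqrt 8 := by
          rw [show (8:ℝ) = 2^2 * 2 by norm_num, Real.sqrt_mul (by positivity), Real.sqrt_sq (by norm_num)]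
      _ ≤ _ := Real.sqrt_le_sqrt h8
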